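/- Let t be an idempotent n-ary operation on a set A compatible with a digraph G on A, and let H be a strongly connected component of G with algebraic length 1. Then the vertex set of H is closed under t: for any v₀,…,v_{n−1} in H, t(v₀,…,v_{n−1}) lies in H. -/

import Mathlib

/-- There is a directed walk of length `k` from `u` to `v` in the digraph with edge relation `E`. -/
def HasWalk {A : Type*} (E : A → A → Prop) (u v : A) (k : ℕ) : Prop :=
  ∃ w : ℕ → A, w 0 = u ∧ w k = v ∧ ∀ i < k, E (w i) (w (i + 1))

theorem hasWalk_refl {A : Type*} (E : A → A → Prop) (u : A) : HasWalk E u u 0 :=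
  ⟨fun _ => u, rfl, rfl, fun i hi => by omega⟩

theorem hasWalk_single {A : Type*} {E : A → A → Prop} {u v : A} (h : E u v) :
    HasWalk E u v 1 :=
  ⟨fun j => if j = 0 then u else v, by simp, by simp, fun i hi => by
    have : i = 0 := by omega
    simp [this, h]⟩

theorem hasWalk_trans {A : Type*} {E : A → A → Prop} {u v x : A} {k l : ℕ}
    (h1 : HasWalk E u v k) (h2 : HasWalk E v x l) : HasWalk E u x (k + l) := by
  obtain ⟨w1, hw10, hw1k, hw1e⟩ := h1
  obtain ⟨w2, hw20, hw2l, hw2e⟩ := h2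
  refine ⟨fun j => if j ≤ k then w1 j else w2 (j - k), by simp [hw10], ?_, ?_⟩
  · by_cases hl : l = 0
    · subst hl
      simp only [Nat.add_zero, le_refl, if_pos]
      rw [hw1k, ← hw2l, hw20]
    · have : ¬ (k + l ≤ k) := by omega
      simp only [this, if_neg, Nat.add_sub_cancel_left]
      exact hw2l
  · intro i hi
    rcases lt_trichotomy i k with hik | hik | hik
    · have h1' : i ≤ k := by omega
      have h2' : i + 1 ≤ k := by omega
      simp only [h1', h2', if_pos]
      exact hw1e i hik
    · subst hik
      have h1' : i ≤ i := le_refl i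
      have h2' : ¬ (i + 1 ≤ i) := by omega
      simp only [h1', h2', if_pos, if_neg, Nat.add_sub_cancel_left]
      rw [hw1k, ← hw20]
      exact hw2e 0 (by omega)
    · have h1' : ¬ (i ≤ k) := by omega
      have h2' : ¬ (i + 1 ≤ k) := by omega
      simp only [h1', h2', if_neg]
      have : i + 1 - k = (i - k) + 1 := by omega
      rw [this]
      exact hw2e (i - k) (by omega)

/-- If `t` is an idempotent `n`-ary operation compatible with a digraph `G = (A, E)`, and `H` is
a strongly connected component of `G` whose induced subgraph has algebraic length 1 (no
homomorphism onto a directed cycle of length `≥ 2`), then `H` is closed under `t`. -/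
theorem component_closed_directed {A : Type*} {n : ℕ} (E : A → A → Prop)
    (t : (Fin n → A) → A)
    (hidem : ∀ a : A, t (fun _ => a) = a)
    (hcomp : ∀ u v : Fin n → A, (∀ i, E (u i) (v i)) → E (t u) (t v))
    (H : Set A)
    (hne : H.Nonempty)
    (hconn : ∀ u ∈ H, ∀ v ∈ H, ∃ k, HasWalk E u v k)
    (hmax : ∀ v : A, (∃ u ∈ H, (∃ k, HasWalk E u v k) ∧ (∃ k, HasWalk E v u k)) → v ∈ H)
    (halg : ∀ m : ℕ, 2 ≤ m →
      ¬ ∃ f : A → ZMod m, ∀ u v : A, u ∈ H → v ∈ H → E u v → f v = f u + 1)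
    (v : Fin n → A) (hv : ∀ i, v i ∈ H) :
    t v ∈ H := by
  classical
  obtain ⟨a, ha⟩ := hne
  set S : Set ℕ := {k | HasWalk E a a k} with hSdef
  have hS0 : (0 : ℕ) ∈ S := hasWalk_refl E a
  have hSadd : ∀ s ∈ S, ∀ s' ∈ S, s + s' ∈ S := fun s hs s' hs' => hasWalk_trans hs hs'
  have hSmul : ∀ (c s : ℕ), s ∈ S → c * s ∈ S := by
    intro c s hs
    induction c with
    | zero => simpa using hS0
    | succ c ih =>
      have : (c + 1) * s = c * s + s := by ring
      rw [this]
      exact hSadd _ ih _ hs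
  -- Step 1: S contains two consecutive numbers
  have hq : ∃ q, q ∈ S ∧ q + 1 ∈ S := by
    by_contra hcon
    push_neg at hcon
    -- the subgroup generated by S in ℤ
    obtain ⟨d, hd⟩ := Int.subgroup_cyclic (AddSubgroup.closure ((fun s : ℕ => (s : ℤ)) '' S))
    have hsubset : ∀ s ∈ S, (s : ℤ) ∈ AddSubgroup.closure {d} := by
      intro s hs
      rw [← hd]
      exact AddSubgroup.subset_closure ⟨s, hs, rfl⟩
    have hddvd : ∀ s ∈ S, d ∣ (s : ℤ) := by
      intro s hs
      obtain ⟨c, hc⟩ := (AddSubgroup.mem_closure_singleton).mp (hsubset s hs)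
      exact ⟨c, by rw [← hc, smul_eq_mul]; ring⟩
    -- every element of the closure is a difference of two elements of S
    have hdiff : ∀ x ∈ AddSubgroup.closure ((fun s : ℕ => (s : ℤ)) '' S),
        ∃ s ∈ S, ∃ u ∈ S, (s : ℤ) - u = x := by
      intro x hx
      induction hx using AddSubgroup.closure_induction with
      | mem y hy =>
        obtain ⟨s, hs, rfl⟩ := hy
        exact ⟨s, hs, 0, hS0, by simp⟩
      | zero => exact ⟨0, hS0, 0, hS0, by simp⟩
      | add y z hy hz ihy ihz =>
        obtain ⟨s1, hs1, u1, hu1, he1⟩ := ihy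
        obtain ⟨s2, hs2, u2, hu2, he2⟩ := ihz
        exact ⟨s1 + s2, hSadd _ hs1 _ hs2, u1 + u2, hSadd _ hu1 _ hu2, by push_cast; omega⟩
      | neg y hy ihy =>
        obtain ⟨s1, hs1, u1, hu1, he1⟩ := ihy
        exact ⟨u1, hu1, s1, hs1, by omega⟩
    have hdin : ∃ s ∈ S, ∃ u ∈ S, (s : ℤ) - u = d := by
      refine hdiff d ?_
      rw [hd]; exact AddSubgroup.mem_closure_singleton.mpr ⟨1, one_zsmul d⟩
    have hdne1 : d.natAbs ≠ 1 := by
      intro h1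
      obtain ⟨s, hs, u, hu, he⟩ := hdin
      rcases Int.natAbs_eq_iff.mp h1 with h | h
      · -- d = 1, so s = u + 1
        have : s = u + 1 := by omega
        exact hcon u hu (this ▸ hs)
      · have : u = s + 1 := by
          rw [h] at he; push_cast at he; omega
        exact hcon s hs (this ▸ hu)
    set m : ℕ := if d = 0 then 2 else d.natAbs with hm
    have hm2 : 2 ≤ m := by
      rcases eq_or_ne d 0 with h | h
      · simp [hm, h]
      · have : d.natAbs ≠ 0 := Int.natAbs_ne_zero.mpr h
        simp only [hm, if_neg h]
        omega
    have hmS : ∀ s ∈ S, ((s : ZMod m) = 0) := by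
      intro s hs
      rw [ZMod.natCast_eq_zero_iff]
      rcases eq_or_ne d 0 with h | h
      · have := hddvd s hs
        rw [h] at this
        have : (s : ℤ) = 0 := by simpa using this
        have : s = 0 := by omega
        simp [this]
      · have h1 : d.natAbs ∣ s := by
          have := Int.natAbs_dvd_natAbs.mpr (hddvd s hs)
          simpa using this
        simpa [hm, if_neg h] using h1
    refine halg m hm2 ⟨fun u => if h : ∃ k, HasWalk E a u k then ((h.choose : ℕ) : ZMod m) else 0, ?_⟩
    intro u w hu hw he
    have hu' : ∃ k, HasWalk E a u k := hconn a ha u hu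
    have hw' : ∃ k, HasWalk E a w k := hconn a ha w hw
    obtain ⟨l, hl⟩ := hconn w hw a ha
    simp only [dif_pos hu', dif_pos hw']
    -- closed walks
    have c1 : hu'.choose + 1 + l ∈ S :=
      hasWalk_trans (hasWalk_trans hu'.choose_spec (hasWalk_single he)) hl
    have c2 : hw'.choose + l ∈ S := hasWalk_trans hw'.choose_spec hl
    have e1 := hmS _ c1
    have e2 := hmS _ c2
    push_cast at e1 e2
    linear_combination e2 - e1
  obtain ⟨q, hqS, hq1S⟩ := hq
  -- Step 2: S contains all numbers ≥ q*q
  have hbig : ∀ k, q * q ≤ k → k ∈ S := by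
    intro k hk
    rcases Nat.eq_zero_or_pos q with hq0 | hq0
    · subst hq0
      have : k * 1 ∈ S := hSmul k 1 (by simpa using hq1S)
      simpa using this
    · obtain ⟨c, rfl⟩ : ∃ c, k = q * q + c := ⟨k - q * q, by omega⟩
      obtain ⟨e, b, hb, rfl⟩ : ∃ e b, b < q ∧ c = e * q + b :=
        ⟨c / q, c % q, Nat.mod_lt _ hq0, by rw [Nat.mul_comm, Nat.div_add_mod]⟩
      obtain ⟨dd, rfl⟩ : ∃ dd, q = b + dd := ⟨q - b, by omega⟩
      have hmem : (dd + e) * (b + dd) + b * ((b + dd) + 1) ∈ S :=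
        hSadd _ (hSmul _ _ hqS) _ (hSmul _ _ hq1S)
      have heq : (dd + e) * (b + dd) + b * ((b + dd) + 1) =
          (b + dd) * (b + dd) + (e * (b + dd) + b) := by ring
      rwa [heq] at hmem
  -- Step 3: choose walks from a to each v i and back, of common lengths
  choose k1 hk1 using fun i => hconn a ha (v i) (hv i)
  choose k2 hk2 using fun i => hconn (v i) (hv i) a ha
  set M1 : ℕ := q * q + Finset.univ.sup k1 with hM1
  set M2 : ℕ := q * q + Finset.univ.sup k2 with hM2
  have hK1 : ∀ i, HasWalk E a (v i) M1 := by
    intro i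
    have hle : k1 i ≤ Finset.univ.sup k1 := Finset.le_sup (Finset.mem_univ i)
    have hmem : M1 - k1 i ∈ S := hbig _ (by omega)
    have := hasWalk_trans hmem (hk1 i)
    rwa [Nat.sub_add_cancel (by omega)] at this
  have hK2 : ∀ i, HasWalk E (v i) a M2 := by
    intro i
    have hle : k2 i ≤ Finset.univ.sup k2 := Finset.le_sup (Finset.mem_univ i)
    have hmem : M2 - k2 i ∈ S := hbig _ (by omega)
    have := hasWalk_trans (hk2 i) hmem
    rwa [Nat.add_sub_cancel' (by omega)] at this
  -- Step 4: combine coordinatewise using t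
  have hto : HasWalk E a (t v) M1 := by
    choose w hw0 hwK hwE using hK1
    refine ⟨fun j => t (fun i => w i j), ?_, ?_, ?_⟩
    · show t (fun i => w i 0) = a
      have : (fun i => w i 0) = fun _ : Fin n => a := funext fun i => hw0 i
      rw [this]; exact hidem a
    · show t (fun i => w i M1) = t v
      have : (fun i => w i M1) = v := funext fun i => hwK i
      rw [this]
    · intro j hj
      exact hcomp _ _ fun i => hwE i j hj
  have hfrom : HasWalk E (t v) a M2 := by
    choose w hw0 hwK hwE using hK2
    refine ⟨fun j => t (fun i => w i j), ?_, ?_, ?_⟩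
    · show t (fun i => w i 0) = t v
      have : (fun i => w i 0) = v := funext fun i => hw0 i
      rw [this]
    · show t (fun i => w i M2) = a
      have : (fun i => w i M2) = fun _ : Fin n => a := funext fun i => hwK i
      rw [this]; exact hidem a
    · intro j hj
      exact hcomp _ _ fun i => hwE i j hj
  exact hmax _ ⟨a, ha, ⟨M1, hto⟩, ⟨M2, hfrom⟩⟩
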